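/- Let N ≥ 1 and let R be the N×N real matrix with entries R(n,m) = min(n,m) for n,m ∈ {1,…,N}. Then R is invertible, and the matrix M := R⁻¹ · R^{∘2} satisfies: M(k,k) = 2k − 1 for every k; M(k,m) = −2 for every k < m; and M(k,m) = 0 for every k > m. In particular M is upper triangular and its eigenvalues, with multiplicity, are {1, 3, 5, …, 2N−1}. -/

import Mathlib

open Matrix Polynomial

noncomputable def minMatrix (N : ℕ) : Matrix (Fin N) (Fin N) ℝ :=
  Matrix.of fun n m => (min ((n : ℕ) + 1) ((m : ℕ) + 1) : ℝ)

noncomputable def minMatrixSq (N : ℕ) : Matrix (Fin N) (Fin N) ℝ :=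
  Matrix.of fun n m => (min ((n : ℕ) + 1) ((m : ℕ) + 1) : ℝ) ^ 2

/-- candidate inverse of `minMatrix`: tridiagonal -/
noncomputable def Tmat (N : ℕ) : Matrix (Fin N) (Fin N) ℝ :=
  Matrix.of fun i k =>
    (if (k:ℕ) = (i:ℕ) then (2:ℝ) else 0) + (if (k:ℕ) = (i:ℕ)+1 then -1 else 0)
    + (if (k:ℕ)+1 = (i:ℕ) then -1 else 0)
    + (if ((k:ℕ) = (i:ℕ) ∧ (i:ℕ)+1 = N) then -1 else 0)

lemma sum_ind {N : ℕ} (t : ℕ) (c : ℝ) (g : Fin N → ℝ) :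
    ∑ k : Fin N, (if (k:ℕ) = t then c else 0) * g k
      = if h : t < N then c * g ⟨t,h⟩ else 0 := by
  split
  · next h =>
    rw [Finset.sum_eq_single (⟨t,h⟩ : Fin N)]
    · simp
    · intro b _ hb
      have : (b:ℕ) ≠ t := fun hh => hb (Fin.ext hh)
      simp [this]
    · simp
  · next h =>
    apply Finset.sum_eq_zero
    intro k _
    have : (k:ℕ) ≠ t := by omega
    simp [this]

lemma Tmul_apply {N : ℕ} (f : ℕ → ℝ) (hf0 : f 0 = 0) (i j : Fin N) :
    (Tmat N * Matrix.of (fun k m : Fin N => f (min ((k:ℕ)+1) ((m:ℕ)+1)))) i j =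
      2 * f (min ((i:ℕ)+1) ((j:ℕ)+1)) - f (min (i:ℕ) ((j:ℕ)+1))
      - (if (i:ℕ)+2 ≤ N then f (min ((i:ℕ)+2) ((j:ℕ)+1)) else 0)
      - (if (i:ℕ)+1 = N then f (min ((i:ℕ)+1) ((j:ℕ)+1)) else 0) := by
  rw [Matrix.mul_apply]
  simp only [Tmat, Matrix.of_apply]
  set g : Fin N → ℝ := fun k => f (min ((k:ℕ)+1) ((j:ℕ)+1)) with hg
  have expand : ∀ k : Fin N,
      ((if (k:ℕ) = (i:ℕ) then (2:ℝ) else 0) + (if (k:ℕ) = (i:ℕ)+1 then -1 else 0)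
        + (if (k:ℕ)+1 = (i:ℕ) then -1 else 0)
        + (if ((k:ℕ) = (i:ℕ) ∧ (i:ℕ)+1 = N) then -1 else 0)) * g k
      = (if (k:ℕ) = (i:ℕ) then (2:ℝ) else 0) * g k
        + (if (k:ℕ) = (i:ℕ)+1 then (-1:ℝ) else 0) * g k
        + (if 1 ≤ (i:ℕ) then (if (k:ℕ) = (i:ℕ)-1 then (-1:ℝ) else 0) else 0) * g k
        + (if (i:ℕ)+1 = N then (if (k:ℕ) = (i:ℕ) then (-1:ℝ) else 0) else 0) * g k := by
    intro k
    have e3 : ((k:ℕ)+1 = (i:ℕ)) = (1 ≤ (i:ℕ) ∧ (k:ℕ) = (i:ℕ)-1) := by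
      apply propext; constructor <;> (intro h; omega)
    have e4 : ((k:ℕ) = (i:ℕ) ∧ (i:ℕ)+1 = N) = ((i:ℕ)+1 = N ∧ (k:ℕ) = (i:ℕ)) := by
      apply propext; exact and_comm
    simp only [e3, e4, ite_and]
    ring
  rw [Finset.sum_congr rfl (fun k _ => expand k), Finset.sum_add_distrib,
    Finset.sum_add_distrib, Finset.sum_add_distrib]
  have hi : (i:ℕ) < N := i.isLt
  have S1 : ∑ k : Fin N, (if (k:ℕ) = (i:ℕ) then (2:ℝ) else 0) * g k
      = 2 * f (min ((i:ℕ)+1) ((j:ℕ)+1)) := by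
    rw [sum_ind (N := N) (i:ℕ) 2 g, dif_pos hi]
  have S2 : ∑ k : Fin N, (if (k:ℕ) = (i:ℕ)+1 then (-1:ℝ) else 0) * g k
      = -(if (i:ℕ)+2 ≤ N then f (min ((i:ℕ)+2) ((j:ℕ)+1)) else 0) := by
    rw [sum_ind (N := N) ((i:ℕ)+1) (-1) g]
    by_cases h : (i:ℕ)+1 < N
    · rw [dif_pos h, if_pos (by omega)]; simp [hg]; congr 1; omega
    · rw [dif_neg h, if_neg (by omega)]; simp
  have S3 : ∑ k : Fin N, (if 1 ≤ (i:ℕ) then (if (k:ℕ) = (i:ℕ)-1 then (-1:ℝ) else 0) else 0) * g k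
      = -f (min (i:ℕ) ((j:ℕ)+1)) := by
    by_cases h : 1 ≤ (i:ℕ)
    · simp only [if_pos h]
      rw [sum_ind (N := N) ((i:ℕ)-1) (-1) g, dif_pos (by omega)]
      have : (i:ℕ)-1+1 = (i:ℕ) := by omega
      simp [hg, this]; congr 1; omega
    · simp only [if_neg h]
      have hi0 : (i:ℕ) = 0 := by omega
      simp [hi0, hf0]
  have S4 : ∑ k : Fin N, (if (i:ℕ)+1 = N then (if (k:ℕ) = (i:ℕ) then (-1:ℝ) else 0) else 0) * g k
      = -(if (i:ℕ)+1 = N then f (min ((i:ℕ)+1) ((j:ℕ)+1)) else 0) := by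
    by_cases h : (i:ℕ)+1 = N
    · simp only [if_pos h]
      rw [sum_ind (N := N) (i:ℕ) (-1) g, dif_pos hi]
      simp [hg]
    · simp [h]
  rw [S1, S2, S3, S4]; ring

lemma TR_eq_one (N : ℕ) : Tmat N * minMatrix N = 1 := by
  ext i j
  have h := Tmul_apply (N := N) (fun n => (n : ℝ)) (by simp) i j
  have hmm : (Matrix.of fun k m : Fin N =>
      (fun n : ℕ => (n:ℝ)) (min ((k:ℕ)+1) ((m:ℕ)+1))) = minMatrix N := by
    ext k m; simp [minMatrix]; rw [min_add_add_right]
  rw [hmm] at h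
  rw [h]
  have hi : (i:ℕ) < N := i.isLt
  have hj : (j:ℕ) < N := j.isLt
  rcases Nat.lt_trichotomy (i:ℕ) (j:ℕ) with hij | hij | hij
  · have hne : i ≠ j := fun hh => by simp [hh] at hij
    rw [Matrix.one_apply_ne hne,
      min_eq_left (by omega : (i:ℕ)+1 ≤ (j:ℕ)+1),
      min_eq_left (by omega : (i:ℕ) ≤ (j:ℕ)+1),
      min_eq_left (by omega : (i:ℕ)+2 ≤ (j:ℕ)+1)]
    split_ifs <;> first | omega | (push_cast; ring)
  · have heq : i = j := Fin.ext hij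
    subst heq
    rw [Matrix.one_apply_eq,
      min_eq_left (le_refl ((i:ℕ)+1)),
      min_eq_left (by omega : (i:ℕ) ≤ (i:ℕ)+1),
      min_eq_right (by omega : (i:ℕ)+1 ≤ (i:ℕ)+2)]
    split_ifs <;> first | omega | (push_cast; ring)
  · have hne : i ≠ j := fun hh => by simp [hh] at hij
    rw [Matrix.one_apply_ne hne,
      min_eq_right (by omega : (j:ℕ)+1 ≤ (i:ℕ)+1),
      min_eq_right (by omega : (j:ℕ)+1 ≤ (i:ℕ)),
      min_eq_right (by omega : (j:ℕ)+1 ≤ (i:ℕ)+2)]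
    split_ifs <;> first | omega | (push_cast; ring)

lemma minMatrix_isUnit (N : ℕ) : IsUnit (minMatrix N) :=
  ⟨⟨minMatrix N, Tmat N, mul_eq_one_comm.mp (TR_eq_one N), TR_eq_one N⟩, rfl⟩

lemma minMatrix_inv (N : ℕ) : (minMatrix N)⁻¹ = Tmat N :=
  Matrix.inv_eq_left_inv (TR_eq_one N)

lemma M_apply (N : ℕ) (i j : Fin N) :
    ((minMatrix N)⁻¹ * minMatrixSq N) i j =
      if (i:ℕ) = (j:ℕ) then 2 * ((i:ℕ) + 1 : ℝ) - 1
      else if (i:ℕ) < (j:ℕ) then -2 else 0 := by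
  rw [minMatrix_inv]
  have h := Tmul_apply (N := N) (fun n => (n : ℝ)^2) (by simp) i j
  have hmm : (Matrix.of fun k m : Fin N =>
      (fun n : ℕ => (n:ℝ)^2) (min ((k:ℕ)+1) ((m:ℕ)+1))) = minMatrixSq N := by
    ext k m; simp [minMatrixSq]; rw [min_add_add_right]
  rw [hmm] at h
  rw [h]
  have hi : (i:ℕ) < N := i.isLt
  have hj : (j:ℕ) < N := j.isLt
  rcases Nat.lt_trichotomy (i:ℕ) (j:ℕ) with hij | hij | hij
  · rw [min_eq_left (by omega : (i:ℕ)+1 ≤ (j:ℕ)+1),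
      min_eq_left (by omega : (i:ℕ) ≤ (j:ℕ)+1),
      min_eq_left (by omega : (i:ℕ)+2 ≤ (j:ℕ)+1)]
    split_ifs <;> first | omega | (push_cast; ring)
  · have heq : i = j := Fin.ext hij
    subst heq
    rw [min_eq_left (le_refl ((i:ℕ)+1)),
      min_eq_left (by omega : (i:ℕ) ≤ (i:ℕ)+1),
      min_eq_right (by omega : (i:ℕ)+1 ≤ (i:ℕ)+2)]
    split_ifs <;> first | omega | (push_cast; ring)
  · rw [min_eq_right (by omega : (j:ℕ)+1 ≤ (i:ℕ)+1),
      min_eq_right (by omega : (j:ℕ)+1 ≤ (i:ℕ)),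
      min_eq_right (by omega : (j:ℕ)+1 ≤ (i:ℕ)+2)]
    split_ifs <;> first | omega | (push_cast; ring)

theorem cauchy_odd_integer_eigenvalues (N : ℕ) (hN : 1 ≤ N) :
    IsUnit (minMatrix N) ∧
    (∀ k : Fin N, ((minMatrix N)⁻¹ * minMatrixSq N) k k = 2 * ((k : ℕ) + 1 : ℝ) - 1) ∧
    (∀ k m : Fin N, k < m → ((minMatrix N)⁻¹ * minMatrixSq N) k m = -2) ∧
    (∀ k m : Fin N, m < k → ((minMatrix N)⁻¹ * minMatrixSq N) k m = 0) ∧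
    ((minMatrix N)⁻¹ * minMatrixSq N).charpoly
      = ∏ k : Fin N, (X - C (2 * ((k : ℕ) + 1 : ℝ) - 1)) := by
  refine ⟨minMatrix_isUnit N, fun k => ?_, fun k m hkm => ?_, fun k m hmk => ?_, ?_⟩
  · rw [M_apply, if_pos rfl]
  · have h1 : (k:ℕ) < (m:ℕ) := hkm
    rw [M_apply, if_neg (by omega : ¬ (k:ℕ) = (m:ℕ)), if_pos h1]
  · have h1 : (m:ℕ) < (k:ℕ) := hmk
    rw [M_apply, if_neg (by omega : ¬ (k:ℕ) = (m:ℕ)), if_neg (by omega : ¬ (k:ℕ) < (m:ℕ))]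
  · have htri : ((minMatrix N)⁻¹ * minMatrixSq N).BlockTriangular id := by
      intro i j hij
      have h1 : (j:ℕ) < (i:ℕ) := hij
      rw [M_apply, if_neg (by omega : ¬ (i:ℕ) = (j:ℕ)), if_neg (by omega : ¬ (i:ℕ) < (j:ℕ))]
    rw [Matrix.charpoly_of_upperTriangular _ htri]
    refine Finset.prod_congr rfl fun k _ => ?_
    rw [M_apply, if_pos rfl]
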